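/- Let λ₁ ≤ λ₂ ≤ λ₃ be real numbers with ν := λ₁+λ₂−λ₃ ≤ λ := λ₁+λ₃−λ₂ ≤ μ := λ₂+λ₃−λ₁. Suppose ν < 0, μ + λ + ν ≥ 1/c₁ for some c₁ > 0 (so μ ≥ 1/(2c₁)), and there exist ε > 0, c > 0 with λ²(μ−ν) ≤ cε and μ²(λ−ν) ≤ cε. Then −ν ≤ C√ε for a constant C depending only on c and c₁. -/

import Mathlib

set_option maxHeartbeats 800000 in
private lemma pinching_aux (c c₁ n lam μ ε : ℝ) (hc : 0 < c) (hc₁ : 0 < c₁)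
    (hνlam : -n ≤ lam) (hlamμ : lam ≤ μ) (hn : 0 < n)
    (hS : 1 / c₁ ≤ μ + lam + -n) (hε : 0 < ε)
    (h1' : lam ^ 2 * (μ + n) ≤ c * ε) (h2' : μ ^ 2 * (lam + n) ≤ c * ε) :
    n ≤ (Real.sqrt (2 * c₁ * c) + 4 * c₁ ^ 2 * c + 2 * (c + 1)) * Real.sqrt ε := by
  have hc₁' : 0 < 1 / c₁ := by positivity
  have hμ2 : 1 / c₁ + n ≤ 2 * μ := by linarith
  have hμc : 1 / (2 * c₁) ≤ μ := by
    have h : 1 / (2 * c₁) = (1 / c₁) / 2 := by field_simp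
    rw [h]; linarith
  have hμn : n / 2 ≤ μ := by linarith
  have hμpos : 0 < μ := lt_of_lt_of_le (by positivity) hμc
  have hs : Real.sqrt ε ^ 2 = ε := Real.sq_sqrt hε.le
  have hspos : 0 < Real.sqrt ε := Real.sqrt_pos.mpr hε
  have hlpn : 0 ≤ lam + n := by linarith
  -- cube bound
  have hcube : n ^ 3 ≤ 8 * (c * ε) := by
    rcases le_or_gt (-(n / 2)) lam with h | h
    · have ha : n ^ 2 / 4 ≤ μ ^ 2 := by
        nlinarith [mul_nonneg (sub_nonneg.mpr hμn) (by linarith : (0:ℝ) ≤ μ + n / 2)]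
      have hb : (n ^ 2 / 4) * (n / 2) ≤ μ ^ 2 * (lam + n) :=
        mul_le_mul ha (by linarith) (by positivity) (sq_nonneg μ)
      nlinarith [hb, h2']
    · have ha : n ^ 2 / 4 ≤ lam ^ 2 := by
        nlinarith [mul_nonneg (by linarith : (0:ℝ) ≤ -lam - n / 2)
          (by linarith : (0:ℝ) ≤ -lam + n / 2)]
      have hb : (n ^ 2 / 4) * n ≤ lam ^ 2 * (μ + n) :=
        mul_le_mul ha (by linarith) hn.le (sq_nonneg lam)
      nlinarith [hb, h1']
  -- bound on lam + n
  have hc4 : (0:ℝ) < 4 * c₁ ^ 2 := by positivity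
  have h7 : (lam + n) / (4 * c₁ ^ 2) ≤ c * ε := by
    have hsq : (1 / (2 * c₁)) ^ 2 ≤ μ ^ 2 := pow_le_pow_left₀ (by positivity) hμc 2
    calc (lam + n) / (4 * c₁ ^ 2) = (1 / (2 * c₁)) ^ 2 * (lam + n) := by
          rw [div_pow]; ring_nf
      _ ≤ μ ^ 2 * (lam + n) := mul_le_mul_of_nonneg_right hsq hlpn
      _ ≤ c * ε := h2'
  have hlampn : lam + n ≤ 4 * c₁ ^ 2 * c * ε := by
    have h := (div_le_iff₀ hc4).mp h7
    linarith [h]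
  -- linear + sqrt bound
  have hlin : n ≤ Real.sqrt (2 * c₁ * c) * Real.sqrt ε + 4 * c₁ ^ 2 * c * ε := by
    rcases le_or_gt 0 lam with hl | hl
    · have hnn : n ≤ 4 * c₁ ^ 2 * c * ε := by linarith
      have := mul_nonneg (Real.sqrt_nonneg (2 * c₁ * c)) hspos.le
      linarith
    · have hc2 : (0:ℝ) < 2 * c₁ := by positivity
      have h8 : lam ^ 2 / (2 * c₁) ≤ c * ε := by
        calc lam ^ 2 / (2 * c₁) = lam ^ 2 * (1 / (2 * c₁)) := by ring
          _ ≤ lam ^ 2 * (μ + n) :=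
              mul_le_mul_of_nonneg_left (by linarith) (sq_nonneg lam)
          _ ≤ c * ε := h1'
      have hlamsq : lam ^ 2 ≤ 2 * c₁ * c * ε := by
        have h := (div_le_iff₀ hc2).mp h8
        linarith [h]
      have hneg : -lam ≤ Real.sqrt (2 * c₁ * c) * Real.sqrt ε := by
        calc -lam ≤ |lam| := neg_le_abs lam
          _ = Real.sqrt (lam ^ 2) := (Real.sqrt_sq_eq_abs lam).symm
          _ ≤ Real.sqrt (2 * c₁ * c * ε) := Real.sqrt_le_sqrt hlamsq
          _ = Real.sqrt (2 * c₁ * c) * Real.sqrt ε := Real.sqrt_mul (by positivity) ε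
      linarith
  -- combine
  rcases le_or_gt ε 1 with he | he
  · have hsle : Real.sqrt ε ≤ 1 := by
      rw [show (1:ℝ) = Real.sqrt 1 by simp]; exact Real.sqrt_le_sqrt he
    have heps : ε ≤ Real.sqrt ε := by
      nlinarith [mul_nonneg hspos.le (by linarith : (0:ℝ) ≤ 1 - Real.sqrt ε)]
    have h9 : 4 * c₁ ^ 2 * c * ε ≤ 4 * c₁ ^ 2 * c * Real.sqrt ε :=
      mul_le_mul_of_nonneg_left heps (by positivity)
    have h10 : 0 ≤ 2 * (c + 1) * Real.sqrt ε := by positivity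
    linarith [hlin, h9, h10]
  · have hsge : 1 ≤ Real.sqrt ε := by
      rw [show (1:ℝ) = Real.sqrt 1 by simp]; exact Real.sqrt_le_sqrt he.le
    have hkey : n ≤ 2 * (c + 1) * Real.sqrt ε := by
      apply le_of_pow_le_pow_left₀ (n := 3) (by norm_num) (by positivity)
      have h6 : ε ≤ Real.sqrt ε ^ 3 := by
        nlinarith [mul_nonneg hε.le (by linarith : (0:ℝ) ≤ Real.sqrt ε - 1)]
      calc n ^ 3 ≤ 8 * (c * ε) := hcube
        _ ≤ 8 * (c + 1) ^ 3 * ε := by nlinarith [sq_nonneg c, sq_nonneg (c + 1), hε.le]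
        _ ≤ 8 * (c + 1) ^ 3 * Real.sqrt ε ^ 3 :=
            mul_le_mul_of_nonneg_left h6 (by positivity)
        _ = (2 * (c + 1) * Real.sqrt ε) ^ 3 := by ring
    have h11 : 0 ≤ (Real.sqrt (2 * c₁ * c) + 4 * c₁ ^ 2 * c) * Real.sqrt ε := by positivity
    linarith [hkey, h11]

/-- Key algebraic step of the Hamilton–Ivey type pinching estimate: if the
smallest curvature eigenvalue `ν` is negative, the scalar curvature is bounded
below by `1/c₁`, and `λ²(μ−ν) ≤ cε`, `μ²(λ−ν) ≤ cε`, then `−ν ≤ C√ε` for a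
constant `C` depending only on `c` and `c₁`. -/
theorem pinching_algebraic_step (c c₁ : ℝ) (hc : 0 < c) (hc₁ : 0 < c₁) :
    ∃ C : ℝ, 0 < C ∧
      ∀ l₁ l₂ l₃ ε : ℝ, l₁ ≤ l₂ → l₂ ≤ l₃ →
        (l₁ + l₂ - l₃) < 0 →
        1 / c₁ ≤ (l₂ + l₃ - l₁) + (l₁ + l₃ - l₂) + (l₁ + l₂ - l₃) →
        0 < ε →
        (l₁ + l₃ - l₂) ^ 2 * ((l₂ + l₃ - l₁) - (l₁ + l₂ - l₃)) ≤ c * ε →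
        (l₂ + l₃ - l₁) ^ 2 * ((l₁ + l₃ - l₂) - (l₁ + l₂ - l₃)) ≤ c * ε →
        -(l₁ + l₂ - l₃) ≤ C * Real.sqrt ε := by
  refine ⟨Real.sqrt (2 * c₁ * c) + 4 * c₁ ^ 2 * c + 2 * (c + 1), by positivity, ?_⟩
  intro l₁ l₂ l₃ ε h12 h23 hν hS hε h1 h2
  have e1 : (l₂ + l₃ - l₁) - (l₁ + l₂ - l₃) = (l₂ + l₃ - l₁) + -(l₁ + l₂ - l₃) := by ring
  have e2 : (l₁ + l₃ - l₂) - (l₁ + l₂ - l₃) = (l₁ + l₃ - l₂) + -(l₁ + l₂ - l₃) := by ring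
  rw [e1] at h1; rw [e2] at h2
  exact pinching_aux c c₁ (-(l₁ + l₂ - l₃)) (l₁ + l₃ - l₂) (l₂ + l₃ - l₁) ε hc hc₁
    (by linarith) (by linarith) (by linarith) (by linarith) hε h1 h2
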